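/- For all a ≥ 1, the Toads and Frogs position T^a □ (TF)^b T F^c with b ≥ 0 and c ≥ 2, possibly preceded by any {T,F}-string L ending in F and followed by any {T,F}-string R starting with T, has game value { a−1 | O^b( L T^a F (TF)^b T □ F^{c−1} R ) }, where O(x) = {0 | x} and O^b is b-fold iteration of O. -/

import Mathlib

universe u

namespace SetTheory

/-- Pre-games, as in the (since removed) Mathlib `SetTheory.PGame`. -/
inductive PGame : Type (u + 1)
  | mk : ∀ α β : Type u, (α → PGame) → (β → PGame) → PGame

namespace PGame

/-- The pair `(x ≤ y, x ⧏ y)`, as in the old Mathlib definition. -/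
noncomputable def leLf (x : PGame.{u}) : PGame.{u} → Prop × Prop :=
  PGame.rec (motive := fun _ => PGame.{u} → Prop × Prop)
    (fun xl xr xL xR IHxL IHxR y =>
      PGame.rec (motive := fun _ => Prop × Prop)
        (fun yl yr yL yR IHyL IHyR =>
          ((∀ i, (IHxL i (mk yl yr yL yR)).2) ∧ ∀ j, (IHyR j).2,
            (∃ i, (IHyL i).1) ∨ ∃ j, (IHxR j (mk yl yr yL yR)).1)) y) x

instance : LE PGame.{u} :=
  ⟨fun x y => (leLf x y).1⟩

/-- Equivalence of pre-games: `x ≤ y ∧ y ≤ x`. -/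
def Equiv (x y : PGame.{u}) : Prop :=
  x ≤ y ∧ y ≤ x

instance : HasEquiv PGame.{u} :=
  ⟨Equiv⟩

instance : Zero PGame.{u} :=
  ⟨⟨PEmpty, PEmpty, PEmpty.elim, PEmpty.elim⟩⟩

/-- Negation of a pre-game. -/
def neg : PGame.{u} → PGame.{u}
  | mk l r L R => mk r l (fun i => neg (R i)) (fun i => neg (L i))

instance : Neg PGame.{u} :=
  ⟨neg⟩

end PGame

end SetTheory


namespace SetTheory.PGame

theorem le_mk {xl xr : Type u} {xL : xl → PGame.{u}} {xR : xr → PGame.{u}}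
    {yl yr : Type u} {yL : yl → PGame.{u}} {yR : yr → PGame.{u}} :
    mk xl xr xL xR ≤ mk yl yr yL yR ↔
      (∀ i, (leLf (xL i) (mk yl yr yL yR)).2) ∧ ∀ j, (leLf (mk xl xr xL xR) (yR j)).2 :=
  Iff.rfl

theorem lf_of_le_L {z : PGame.{u}} {yl yr : Type u} {yL : yl → PGame.{u}}
    {yR : yr → PGame.{u}} (i : yl) (h : z ≤ yL i) : (leLf z (mk yl yr yL yR)).2 := by
  cases z
  exact Or.inl ⟨i, h⟩

theorem lf_of_R_le {z : PGame.{u}} {xl xr : Type u} {xL : xl → PGame.{u}}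
    {xR : xr → PGame.{u}} (j : xr) (h : xR j ≤ z) : (leLf (mk xl xr xL xR) z).2 := by
  cases z
  exact Or.inr ⟨j, h⟩

theorem le_refl' : ∀ x : PGame.{u}, x ≤ x
  | mk _ _ xL xR => ⟨fun i => lf_of_le_L i (le_refl' (xL i)),
      fun j => lf_of_R_le j (le_refl' (xR j))⟩

theorem equiv_rfl {x : PGame.{u}} : x ≈ x := ⟨le_refl' x, le_refl' x⟩

end SetTheory.PGame

open SetTheory

inductive Cell : Type
  | T | F | E
deriving DecidableEq

/-- Positions reachable from `l` by a single Toad (Left) move: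
a Toad steps right into an empty square, or jumps over one adjacent Frog
into the empty square beyond. -/
def toadMoves : List Cell → List (List Cell)
  | [] => []
  | c :: rest =>
    (match c, rest with
     | Cell.T, Cell.E :: r => [Cell.E :: Cell.T :: r]
     | Cell.T, Cell.F :: Cell.E :: r => [Cell.E :: Cell.F :: Cell.T :: r]
     | _, _ => []) ++ (toadMoves rest).map (c :: ·)

/-- Positions reachable from `l` by a single Frog (Right) move. -/
def frogMoves : List Cell → List (List Cell)
  | [] => []
  | c :: rest =>
    (match c, rest with
     | Cell.E, Cell.F :: r => [Cell.F :: Cell.E :: r]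
     | Cell.E, Cell.T :: Cell.F :: r => [Cell.F :: Cell.T :: Cell.E :: r]
     | _, _ => []) ++ (frogMoves rest).map (c :: ·)

/-- A weight which strictly decreases with every legal move: each Toad
contributes the number of squares strictly to its right, each Frog the number
of squares strictly to its left. -/
def wt : List Cell → ℕ
  | [] => 0
  | c :: rest =>
    (if c = Cell.T then rest.length else 0) + rest.countP (· = Cell.F) + wt rest

/-- Game tree with fuel; since `wt` strictly decreases along moves and
positions of weight `0` have no moves, `gameAux n l` is the true game
tree of `l` whenever `wt l ≤ n`. -/
def gameAux : ℕ → List Cell → PGame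
  | 0, _ => 0
  | n + 1, l =>
    PGame.mk {m // m ∈ toadMoves l} {m // m ∈ frogMoves l}
      (fun m => gameAux n m.1) (fun m => gameAux n m.1)

/-- The game (PGame) associated to a Toads and Frogs position. -/
def tfGame (l : List Cell) : PGame := gameAux (wt l + 1) l

/-- The game `{x | y}` with a single Left option `x` and single Right option `y`. -/
def gmk (x y : PGame) : PGame :=
  PGame.mk PUnit PUnit (fun _ => x) (fun _ => y)

/-- The canonical game of a natural number. -/
def natGame : ℕ → PGame
  | 0 => 0
  | n + 1 => PGame.mk PUnit PEmpty (fun _ => natGame n) (fun x => x.elim)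

/-- The canonical game of an integer. -/
def intGame : ℤ → PGame
  | Int.ofNat n => natGame n
  | Int.negSucc n => -natGame (n + 1)

/-- `(TF)^b` : the block `TF` repeated `b` times. -/
def tfBlock (b : ℕ) : List Cell := (List.replicate b [Cell.T, Cell.F]).flatten

-- batch 1: move enumeration lemmas
lemma noE_toad : ∀ {l : List Cell}, Cell.E ∉ l → toadMoves l = [] := by
  intro l
  induction l with
  | nil => intro _; rfl
  | cons c rest ih =>
    intro h
    simp only [List.mem_cons, not_or] at h
    rw [toadMoves]
    · rw [ih h.2]; rfl
    · intro r _ h2; exact h.2 (h2 ▸ by simp)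
    · intro r _ h2; exact h.2 (h2 ▸ by simp)

lemma noE_frog : ∀ {l : List Cell}, Cell.E ∉ l → frogMoves l = [] := by
  intro l
  induction l with
  | nil => intro _; rfl
  | cons c rest ih =>
    intro h
    simp only [List.mem_cons, not_or] at h
    rw [frogMoves]
    · rw [ih h.2]; rfl
    · intro r h1 _; exact h.1 h1.symm
    · intro r h1 _; exact h.1 h1.symm

lemma toadMoves_E_cons {Y : List Cell} (hY : Cell.E ∉ Y) :
    toadMoves (Cell.E :: Y) = [] := by
  rw [toadMoves]
  · rw [noE_toad hY]; rfl
  · intro r h _; cases h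
  · intro r h _; cases h

lemma frogMoves_cons_ne {c : Cell} (rest : List Cell) (h : c ≠ Cell.E) :
    frogMoves (c :: rest) = (frogMoves rest).map (c :: ·) := by
  rw [frogMoves]
  · simp
  · intro r h1 _; exact h h1
  · intro r h1 _; exact h h1

lemma toadMoves_cons_ne {c : Cell} (rest : List Cell)
    (h1 : rest.head? ≠ some Cell.E)
    (h2 : rest.head? = some Cell.F → rest.tail.head? ≠ some Cell.E) :
    toadMoves (c :: rest) = (toadMoves rest).map (c :: ·) := by
  rw [toadMoves]
  · simp
  · intro r _ hr; rw [hr] at h1; exact h1 rfl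
  · intro r _ hr; rw [hr] at h2; exact (h2 rfl) rfl

-- batch 2: enumeration over a prefix
lemma head?_ne_E {X : List Cell} (hX : Cell.E ∉ X) {d : Cell} (hd : d ≠ Cell.E) (Y : List Cell) :
    (X ++ d :: Y).head? ≠ some Cell.E := by
  cases X with
  | nil => simpa using hd
  | cons x X =>
    intro h
    injection h with h
    exact hX (by simp [h])

lemma toadMoves_slide (X : List Cell) {Y : List Cell} (hX : Cell.E ∉ X) (hY : Cell.E ∉ Y) :
    toadMoves (X ++ Cell.T :: Cell.E :: Y) = [X ++ Cell.E :: Cell.T :: Y] := by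
  induction X with
  | nil => simp [toadMoves, toadMoves_E_cons hY]; rw [noE_toad hY]
  | cons c X ih =>
    have hX' : Cell.E ∉ X := fun h => hX (by simp [h])
    have h2 : (X ++ Cell.T :: Cell.E :: Y).head? = some Cell.F →
        (X ++ Cell.T :: Cell.E :: Y).tail.head? ≠ some Cell.E := by
      cases X with
      | nil => intro hf; simp at hf
      | cons x X' =>
        intro _
        simp only [List.cons_append, List.tail_cons]
        exact head?_ne_E (fun h => hX' (by simp [h])) (by simp) _
    rw [List.cons_append, toadMoves_cons_ne _ (head?_ne_E hX' (by simp) _) h2, ih hX']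
    rfl

lemma toadMoves_jump (X : List Cell) {Y : List Cell} (hX : Cell.E ∉ X) (hY : Cell.E ∉ Y) :
    toadMoves (X ++ Cell.T :: Cell.F :: Cell.E :: Y) = [X ++ Cell.E :: Cell.F :: Cell.T :: Y] := by
  induction X with
  | nil => simp [toadMoves, toadMoves_E_cons hY]; rw [noE_toad hY]
  | cons c X ih =>
    have hX' : Cell.E ∉ X := fun h => hX (by simp [h])
    have h2 : (X ++ Cell.T :: Cell.F :: Cell.E :: Y).head? = some Cell.F →
        (X ++ Cell.T :: Cell.F :: Cell.E :: Y).tail.head? ≠ some Cell.E := by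
      cases X with
      | nil => intro hf; simp at hf
      | cons x X' =>
        intro _
        simp only [List.cons_append, List.tail_cons]
        exact head?_ne_E (fun h => hX' (by simp [h])) (by simp) _
    rw [List.cons_append, toadMoves_cons_ne _ (head?_ne_E hX' (by simp) _) h2, ih hX']
    rfl

lemma toadMoves_FE {Y : List Cell} (hY : Cell.E ∉ Y) :
    toadMoves (Cell.F :: Cell.E :: Y) = [] := by
  rw [toadMoves]
  · rw [toadMoves_E_cons hY]; rfl
  · intro r h _; cases h
  · intro r h _; cases h

lemma toadMoves_FF (X : List Cell) {Y : List Cell} (hX : Cell.E ∉ X) (hY : Cell.E ∉ Y) :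
    toadMoves (X ++ Cell.F :: Cell.F :: Cell.E :: Y) = [] := by
  induction X with
  | nil =>
    rw [List.nil_append, toadMoves]
    · rw [toadMoves_FE hY]; rfl
    · intro r h _; cases h
    · intro r h _; cases h
  | cons c X ih =>
    have hX' : Cell.E ∉ X := fun h => hX (by simp [h])
    have h2 : (X ++ Cell.F :: Cell.F :: Cell.E :: Y).head? = some Cell.F →
        (X ++ Cell.F :: Cell.F :: Cell.E :: Y).tail.head? ≠ some Cell.E := by
      cases X with
      | nil => intro _; simp
      | cons x X' =>
        intro _
        simp only [List.cons_append, List.tail_cons]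
        exact head?_ne_E (fun h => hX' (by simp [h])) (by simp) _
    rw [List.cons_append, toadMoves_cons_ne _ (head?_ne_E hX' (by simp) _) h2, ih hX']
    rfl

lemma frogMoves_slide (X : List Cell) {Y : List Cell} (hX : Cell.E ∉ X) (hY : Cell.E ∉ Y) :
    frogMoves (X ++ Cell.E :: Cell.F :: Y) = [X ++ Cell.F :: Cell.E :: Y] := by
  induction X with
  | nil => rw [List.nil_append, frogMoves, noE_frog (l := Cell.F :: Y) (by simpa using hY)]; rfl
  | cons c X ih =>
    have hX' : Cell.E ∉ X := fun h => hX (by simp [h])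
    rw [List.cons_append, frogMoves_cons_ne _ (fun h => hX (by simp [h])), ih hX']
    rfl

lemma frogMoves_jump (X : List Cell) {Y : List Cell} (hX : Cell.E ∉ X) (hY : Cell.E ∉ Y) :
    frogMoves (X ++ Cell.E :: Cell.T :: Cell.F :: Y) = [X ++ Cell.F :: Cell.T :: Cell.E :: Y] := by
  induction X with
  | nil => rw [List.nil_append, frogMoves, noE_frog (l := Cell.T :: Cell.F :: Y) (by simpa using hY)]; rfl
  | cons c X ih =>
    have hX' : Cell.E ∉ X := fun h => hX (by simp [h])
    rw [List.cons_append, frogMoves_cons_ne _ (fun h => hX (by simp [h])), ih hX']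
    rfl

lemma frogMoves_TT (X : List Cell) {Y : List Cell} (hX : Cell.E ∉ X) (hY : Cell.E ∉ Y) :
    frogMoves (X ++ Cell.E :: Cell.T :: Cell.T :: Y) = [] := by
  induction X with
  | nil =>
    rw [List.nil_append, frogMoves]
    · rw [noE_frog (l := Cell.T :: Cell.T :: Y) (by simpa using hY)]; rfl
    · intro r _ h; simp at h
    · intro r _ h; simp at h
  | cons c X ih =>
    have hX' : Cell.E ∉ X := fun h => hX (by simp [h])
    rw [List.cons_append, frogMoves_cons_ne _ (fun h => hX (by simp [h])), ih hX']
    rfl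

-- batch 3: weight decrease, fuel irrelevance
lemma toad_wt : ∀ {l m : List Cell}, m ∈ toadMoves l →
    wt m < wt l ∧ m.length = l.length ∧ m.countP (· = Cell.F) = l.countP (· = Cell.F) := by
  intro l
  induction l with
  | nil => intro m h; simp [toadMoves] at h
  | cons c rest ih =>
    intro m hm
    rw [toadMoves.eq_def] at hm
    dsimp only at hm
    rcases List.mem_append.1 hm with h | h
    · split at h
      · simp only [List.mem_singleton] at h
        subst h
        refine ⟨?_, by simp, by simp [List.countP_cons]⟩
        first
        | (simp [wt, List.countP_cons]; omega)
        | simp [wt, List.countP_cons]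
      · simp only [List.mem_singleton] at h
        subst h
        refine ⟨?_, by simp, by simp [List.countP_cons]⟩
        first
        | (simp [wt, List.countP_cons]; omega)
        | simp [wt, List.countP_cons]
      · simp at h
    · obtain ⟨m', hm', rfl⟩ := List.mem_map.1 h
      obtain ⟨h1, h2, h3⟩ := ih hm'
      refine ⟨?_, by simp [h2], by simp [List.countP_cons, h3]⟩
      simp only [wt, h2, h3]
      exact Nat.add_lt_add_left h1 _

lemma frog_wt : ∀ {l m : List Cell}, m ∈ frogMoves l →
    wt m < wt l ∧ m.length = l.length ∧ m.countP (· = Cell.F) = l.countP (· = Cell.F) := by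
  intro l
  induction l with
  | nil => intro m h; simp [frogMoves] at h
  | cons c rest ih =>
    intro m hm
    rw [frogMoves.eq_def] at hm
    dsimp only at hm
    rcases List.mem_append.1 hm with h | h
    · split at h
      · simp only [List.mem_singleton] at h
        subst h
        refine ⟨?_, by simp, by simp [List.countP_cons]⟩
        first
        | (simp [wt, List.countP_cons]; omega)
        | simp [wt, List.countP_cons]
      · simp only [List.mem_singleton] at h
        subst h
        refine ⟨?_, by simp, by simp [List.countP_cons]⟩
        first
        | (simp [wt, List.countP_cons]; omega)
        | simp [wt, List.countP_cons]
      · simp at h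
    · obtain ⟨m', hm', rfl⟩ := List.mem_map.1 h
      obtain ⟨h1, h2, h3⟩ := ih hm'
      refine ⟨?_, by simp [h2], by simp [List.countP_cons, h3]⟩
      simp only [wt, h2, h3]
      exact Nat.add_lt_add_left h1 _

lemma gameAux_irrel : ∀ n l, wt l < n → gameAux n l = gameAux (wt l + 1) l := by
  intro n
  induction n using Nat.strong_induction_on with
  | _ n ih =>
    intro l hl
    match n, hl with
    | n + 1, hl =>
      rw [gameAux, gameAux]
      congr 1
      · funext m
        have h1 := (toad_wt m.2).1
        calc gameAux n m.1 = gameAux (wt m.1 + 1) m.1 :=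
              ih n (Nat.lt_succ_self n) m.1 (by omega)
          _ = gameAux (wt l) m.1 :=
              (ih (wt l) (by omega) m.1 (by omega)).symm
      · funext m
        have h1 := (frog_wt m.2).1
        calc gameAux n m.1 = gameAux (wt m.1 + 1) m.1 :=
              ih n (Nat.lt_succ_self n) m.1 (by omega)
          _ = gameAux (wt l) m.1 :=
              (ih (wt l) (by omega) m.1 (by omega)).symm

lemma tfGame_eq (l : List Cell) : tfGame l =
    PGame.mk {m // m ∈ toadMoves l} {m // m ∈ frogMoves l}
      (fun m => tfGame m.1) (fun m => tfGame m.1) := by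
  rw [tfGame, gameAux]
  congr 1
  · funext m
    exact gameAux_irrel (wt l) m.1 (toad_wt m.2).1
  · funext m
    exact gameAux_irrel (wt l) m.1 (frog_wt m.2).1

-- batch 4: equivalence combinators
open SetTheory.PGame in
lemma tf_equiv_mk {l x y : List Cell} {X Y : PGame}
    (ht : toadMoves l = [x]) (hf : frogMoves l = [y])
    (hx : tfGame x ≈ X) (hy : tfGame y ≈ Y) : tfGame l ≈ gmk X Y := by
  rw [tfGame_eq l]
  constructor
  · refine le_mk.2 ⟨?_, ?_⟩
    · rintro ⟨m, hm⟩
      rw [ht, List.mem_singleton] at hm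
      subst hm
      exact lf_of_le_L (yL := fun _ => X) PUnit.unit hx.1
    · intro j
      exact lf_of_R_le
        (⟨y, by rw [hf]; exact List.mem_singleton.2 rfl⟩ :
          {m // m ∈ frogMoves l}) hy.1
  · refine le_mk.2 ⟨?_, ?_⟩
    · intro i
      exact lf_of_le_L
        (⟨x, by rw [ht]; exact List.mem_singleton.2 rfl⟩ :
          {m // m ∈ toadMoves l}) hx.2
    · rintro ⟨m, hm⟩
      rw [hf, List.mem_singleton] at hm
      subst hm
      exact lf_of_R_le (xR := fun _ => Y) PUnit.unit hy.2

open SetTheory.PGame in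
lemma tf_equiv_zero {l : List Cell} (ht : toadMoves l = []) (hf : frogMoves l = []) :
    tfGame l ≈ 0 := by
  rw [tfGame_eq l]
  constructor
  · refine le_mk.2 ⟨?_, fun j => PEmpty.elim j⟩
    rintro ⟨m, hm⟩
    rw [ht] at hm
    exact absurd hm (by simp)
  · refine le_mk.2 ⟨fun i => PEmpty.elim i, ?_⟩
    rintro ⟨m, hm⟩
    rw [hf] at hm
    exact absurd hm (by simp)

open SetTheory.PGame in
lemma tf_equiv_natSucc {l x : List Cell} {n : ℕ}
    (ht : toadMoves l = [x]) (hf : frogMoves l = []) (hx : tfGame x ≈ natGame n) :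
    tfGame l ≈ natGame (n + 1) := by
  rw [tfGame_eq l]
  constructor
  · refine le_mk.2 ⟨?_, ?_⟩
    · rintro ⟨m, hm⟩
      rw [ht, List.mem_singleton] at hm
      subst hm
      exact lf_of_le_L (yL := fun _ => natGame n) PUnit.unit hx.1
    · rintro ⟨⟩
  · refine le_mk.2 ⟨?_, ?_⟩
    · intro i
      exact lf_of_le_L
        (⟨x, by rw [ht]; exact List.mem_singleton.2 rfl⟩ :
          {m // m ∈ toadMoves l}) hx.2
    · rintro ⟨m, hm⟩
      rw [hf] at hm
      exact absurd hm (by simp)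

open SetTheory.PGame in
lemma tf_equiv_zero_jump {l x z : List Cell}
    (ht : toadMoves l = [x]) (hf : frogMoves l = [])
    (hz : z ∈ frogMoves x) (h0 : tfGame z ≤ 0) : tfGame l ≈ 0 := by
  rw [tfGame_eq l]
  constructor
  · refine le_mk.2 ⟨?_, fun j => PEmpty.elim j⟩
    rintro ⟨m, hm⟩
    rw [ht, List.mem_singleton] at hm
    subst hm
    show (PGame.leLf (tfGame m) 0).2
    rw [tfGame_eq m]
    exact lf_of_R_le ⟨z, hz⟩ h0
  · refine le_mk.2 ⟨fun i => PEmpty.elim i, ?_⟩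
    rintro ⟨m, hm⟩
    rw [hf] at hm
    exact absurd hm (by simp)

-- batch 5: trailT, Ypart, misc
def trailT (L : List Cell) : ℕ := (L.reverse.takeWhile (· = Cell.T)).length

lemma trailT_nil : trailT [] = 0 := rfl

lemma trailT_T (L : List Cell) : trailT (L ++ [Cell.T]) = trailT L + 1 := by
  simp [trailT, List.takeWhile]

lemma trailT_F (L : List Cell) : trailT (L ++ [Cell.F]) = 0 := by
  simp [trailT, List.takeWhile]

lemma trailT_rep (L : List Cell) (hL : L = [] ∨ L.getLast? = some Cell.F) :
    ∀ m : ℕ, trailT (L ++ List.replicate m Cell.T) = m := by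
  intro m
  induction m with
  | zero =>
    simp only [List.replicate_zero, List.append_nil]
    rcases hL with rfl | hL
    · rfl
    · obtain ⟨L', d, rfl⟩ :=
        (List.eq_nil_or_concat L).resolve_left (by rintro rfl; simp at hL)
      simp only [List.concat_eq_append] at hL ⊢
      rw [List.getLast?_concat] at hL
      obtain rfl : d = Cell.F := by simpa using hL
      exact trailT_F L'
  | succ m ih =>
    rw [List.replicate_succ' , ← List.append_assoc, trailT_T, ih]

lemma E_not_mem_rep_T (n : ℕ) : Cell.E ∉ List.replicate n Cell.T := by
  intro h; have := List.eq_of_mem_replicate h; cases this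

lemma E_not_mem_rep_F (n : ℕ) : Cell.E ∉ List.replicate n Cell.F := by
  intro h; have := List.eq_of_mem_replicate h; cases this

lemma E_not_mem_tfBlock (b : ℕ) : Cell.E ∉ tfBlock b := by
  intro h
  rw [tfBlock, List.mem_flatten] at h
  obtain ⟨l, hl, hEl⟩ := h
  rw [List.eq_of_mem_replicate hl] at hEl
  simp at hEl

lemma tfBlock_succ (b : ℕ) : tfBlock (b + 1) = Cell.T :: Cell.F :: tfBlock b := by
  simp [tfBlock, List.replicate_succ]

lemma tfBlock_succ' (b : ℕ) : tfBlock (b + 1) = tfBlock b ++ [Cell.T, Cell.F] := by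
  simp [tfBlock, List.replicate_succ']

/-- the part of the board to the right of the blank, in the `claimD` family. -/
def Ypart (k b c : ℕ) (R : List Cell) : List Cell :=
  List.replicate k Cell.T ++ tfBlock b ++ [Cell.T] ++ List.replicate c Cell.F ++ R

lemma E_not_mem_Ypart {k b c : ℕ} {R : List Cell} (hR : Cell.E ∉ R) :
    Cell.E ∉ Ypart k b c R := by
  simp only [Ypart, List.append_assoc, List.mem_append]
  rintro (h | h | h | h | h)
  exacts [E_not_mem_rep_T _ h, E_not_mem_tfBlock _ h, by simpa using h,
    E_not_mem_rep_F _ h, hR h]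

lemma Ypart_succ (k b c : ℕ) (R : List Cell) :
    Ypart (k+1) b c R = Cell.T :: Ypart k b c R := by
  simp [Ypart, List.replicate_succ]

lemma Ypart_TT (k b c : ℕ) (R : List Cell) (hk : 1 ≤ k) :
    ∃ r, Ypart k b c R = Cell.T :: Cell.T :: r := by
  obtain ⟨k, rfl⟩ : ∃ k', k = k' + 1 := ⟨k - 1, by omega⟩
  rw [Ypart_succ]
  cases k with
  | succ k => exact ⟨_, by rw [Ypart_succ]⟩
  | zero =>
    cases b with
    | zero => exact ⟨List.replicate c Cell.F ++ R, by simp [Ypart, tfBlock]⟩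
    | succ b =>
      refine ⟨Cell.F :: tfBlock b ++ [Cell.T] ++ List.replicate c Cell.F ++ R, ?_⟩
      simp [Ypart, tfBlock_succ]

-- batch 6: claim D
lemma frog_none_D (L : List Cell) (hL : Cell.E ∉ L) (k b c : ℕ) (R : List Cell)
    (hk : 1 ≤ k) (hR : Cell.E ∉ R) :
    frogMoves (L ++ Cell.E :: Ypart k b c R) = [] := by
  obtain ⟨r, hr⟩ := Ypart_TT k b c R hk
  have hY := E_not_mem_Ypart (k := k) (b := b) (c := c) hR
  rw [hr] at hY ⊢
  have hr' : Cell.E ∉ r := fun h => hY (by simp [h])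
  exact frogMoves_TT L hL hr'

lemma claimD : ∀ (N : ℕ) (L : List Cell), L.length ≤ N → Cell.E ∉ L →
    ∀ (k b c : ℕ) (R : List Cell), 1 ≤ k → Cell.E ∉ R →
    tfGame (L ++ Cell.E :: Ypart k b c R) ≈ natGame (trailT L) := by
  intro N
  induction N with
  | zero =>
    intro L hlen hL k b c R hk hR
    obtain rfl : L = [] := List.eq_nil_of_length_eq_zero (by omega)
    rw [trailT_nil]
    exact tf_equiv_zero
      (by rw [List.nil_append]; exact toadMoves_E_cons (E_not_mem_Ypart hR))
      (frog_none_D [] (by simp) k b c R hk hR)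
  | succ N ih =>
    intro L hlen hL k b c R hk hR
    have hf := frog_none_D L hL k b c R hk hR
    rcases List.eq_nil_or_concat L with rfl | ⟨L', d, rfl⟩
    · rw [trailT_nil]
      exact tf_equiv_zero
        (by rw [List.nil_append]; exact toadMoves_E_cons (E_not_mem_Ypart hR)) hf
    · simp only [List.concat_eq_append] at *
      have hL' : Cell.E ∉ L' := fun h => hL (by simp [h])
      have hd : d ≠ Cell.E := fun h => hL (by simp [h])
      have hlen' : L'.length ≤ N := by simp at hlen; omega
      cases d with
      | E => exact absurd rfl hd
      | T =>
        have ht : toadMoves ((L' ++ [Cell.T]) ++ Cell.E :: Ypart k b c R) =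
            [L' ++ Cell.E :: Ypart (k+1) b c R] := by
          rw [List.append_assoc, List.singleton_append,
            toadMoves_slide L' hL' (E_not_mem_Ypart hR), Ypart_succ]
        rw [trailT_T]
        exact tf_equiv_natSucc ht hf (ih L' hlen' hL' (k+1) b c R (by omega) hR)
      | F =>
        rw [trailT_F]
        rcases List.eq_nil_or_concat L' with rfl | ⟨L'', d', rfl⟩
        · have ht : toadMoves (([] ++ [Cell.F]) ++ Cell.E :: Ypart k b c R) = [] := by
            rw [List.nil_append, List.singleton_append]
            exact toadMoves_FE (E_not_mem_Ypart hR)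
          exact tf_equiv_zero ht hf
        · simp only [List.concat_eq_append] at *
          have hL'' : Cell.E ∉ L'' := fun h => hL' (by simp [h])
          cases d' with
          | E => exact absurd (by simp) hL'
          | F =>
            have ht : toadMoves (((L'' ++ [Cell.F]) ++ [Cell.F]) ++ Cell.E :: Ypart k b c R) = [] := by
              have := toadMoves_FF L'' hL'' (E_not_mem_Ypart (k := k) (b := b) (c := c) hR)
              simpa [List.append_assoc] using this
            exact tf_equiv_zero ht hf
          | T =>
            have ht : toadMoves (((L'' ++ [Cell.T]) ++ [Cell.F]) ++ Cell.E :: Ypart k b c R) =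
                [L'' ++ Cell.E :: Cell.F :: Ypart (k+1) b c R] := by
              have := toadMoves_jump L'' hL'' (E_not_mem_Ypart (k := k) (b := b) (c := c) hR)
              rw [Ypart_succ]
              simpa [List.append_assoc] using this
            have hz : (L'' ++ [Cell.F]) ++ Cell.E :: Ypart (k+1) b c R ∈
                frogMoves (L'' ++ Cell.E :: Cell.F :: Ypart (k+1) b c R) := by
              rw [frogMoves_slide L'' hL'' (E_not_mem_Ypart hR)]
              simp [List.append_assoc]
            have hLF : Cell.E ∉ L'' ++ [Cell.F] := by
              intro h
              rcases List.mem_append.1 h with h | h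
              · exact hL'' h
              · simp at h
            have h0 := ih (L'' ++ [Cell.F]) (by simp at hlen ⊢; omega)
              hLF (k+1) b c R (by omega) hR
            rw [trailT_F] at h0
            exact tf_equiv_zero_jump ht hf hz h0.1

-- batch 7: claim E
lemma tfBlock_zero : tfBlock 0 = [] := rfl

lemma natGame_zero : natGame 0 = 0 := rfl

lemma repF_succ (c : ℕ) (hc : 1 ≤ c) :
    List.replicate c Cell.F = Cell.F :: List.replicate (c-1) Cell.F := by
  obtain ⟨c', rfl⟩ : ∃ c', c = c'+1 := ⟨c-1, by omega⟩
  simp [List.replicate_succ]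

lemma trailT_PFtf (P' : List Cell) (u : ℕ) :
    trailT (P' ++ [Cell.F] ++ tfBlock u) = 0 := by
  cases u with
  | zero => simpa [tfBlock] using trailT_F P'
  | succ u =>
    rw [tfBlock_succ']
    have := trailT_F (P' ++ [Cell.F] ++ tfBlock u ++ [Cell.T])
    simpa [List.append_assoc] using this

lemma E_not_mem_PFtf {P' : List Cell} (hP : Cell.E ∉ P') (u : ℕ) :
    Cell.E ∉ P' ++ [Cell.F] ++ tfBlock u := by
  simp only [List.mem_append]
  rintro ((h | h) | h)
  exacts [hP h, by simp at h, E_not_mem_tfBlock u h]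

lemma claimE : ∀ (v u : ℕ) (P' : List Cell) (c : ℕ) (R : List Cell),
    Cell.E ∉ P' → 1 ≤ c → Cell.E ∉ R →
    tfGame (P' ++ [Cell.F] ++ tfBlock u ++ [Cell.T] ++
        Cell.E :: (tfBlock v ++ [Cell.T] ++ List.replicate c Cell.F ++ R)) ≈
      (fun x => gmk 0 x)^[v+1]
        (tfGame (P' ++ [Cell.F] ++ tfBlock (u+v+1) ++ [Cell.T, Cell.E] ++
          List.replicate (c-1) Cell.F ++ R)) := by
  intro v
  induction v with
  | zero =>
    intro u P' c R hP hc hR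
    have hX := E_not_mem_PFtf hP u
    have hYn : Cell.E ∉ List.replicate (c-1) Cell.F ++ R := by
      simp only [List.mem_append]
      rintro (h | h)
      exacts [E_not_mem_rep_F _ h, hR h]
    have ht := toadMoves_slide (P' ++ [Cell.F] ++ tfBlock u)
      (Y := Cell.T :: Cell.F :: (List.replicate (c-1) Cell.F ++ R)) hX
      (by simpa using hYn)
    have hf := frogMoves_jump (P' ++ [Cell.F] ++ tfBlock u ++ [Cell.T])
      (Y := List.replicate (c-1) Cell.F ++ R)
      (by intro hmem
          rcases List.mem_append.1 hmem with h | h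
          exacts [hX h, by simp at h]) hYn
    have h0 : trailT (P' ++ [Cell.F] ++ tfBlock u) = 0 := trailT_PFtf P' u
    have hx := claimD (P' ++ [Cell.F] ++ tfBlock u).length _ le_rfl hX 1 0 c R
      (by omega) hR
    rw [h0] at hx
    rw [show u + 0 + 1 = u + 1 from rfl, tfBlock_succ' u, repF_succ c hc]
    simp only [Nat.zero_add, Function.iterate_one]
    simp only [List.append_assoc, List.cons_append, List.singleton_append,
      List.nil_append] at ht hf ⊢
    simp only [Ypart, tfBlock_zero, repF_succ c hc, natGame_zero, List.append_assoc,
      List.cons_append, List.singleton_append, List.nil_append] at hx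
    exact tf_equiv_mk ht hf hx SetTheory.PGame.equiv_rfl
  | succ v ih =>
    intro u P' c R hP hc hR
    have hX := E_not_mem_PFtf hP u
    have hYv : Cell.E ∉ tfBlock v ++ [Cell.T] ++ List.replicate c Cell.F ++ R := by
      simp only [List.mem_append]
      rintro (((h | h) | h) | h)
      exacts [E_not_mem_tfBlock v h, by simp at h, E_not_mem_rep_F _ h, hR h]
    have ht := toadMoves_slide (P' ++ [Cell.F] ++ tfBlock u)
      (Y := Cell.T :: Cell.F :: (tfBlock v ++ [Cell.T] ++ List.replicate c Cell.F ++ R)) hX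
      (by simpa using hYv)
    have hf := frogMoves_jump (P' ++ [Cell.F] ++ tfBlock u ++ [Cell.T])
      (Y := tfBlock v ++ [Cell.T] ++ List.replicate c Cell.F ++ R)
      (by intro hmem
          rcases List.mem_append.1 hmem with h | h
          exacts [hX h, by simp at h]) hYv
    have h0 : trailT (P' ++ [Cell.F] ++ tfBlock u) = 0 := trailT_PFtf P' u
    have hx := claimD (P' ++ [Cell.F] ++ tfBlock u).length _ le_rfl hX 1 (v+1) c R
      (by omega) hR
    rw [h0] at hx
    have hy := ih (u+1) P' c R hP hc hR
    rw [show u + 1 + v + 1 = u + (v+1) + 1 from by omega] at hy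
    rw [tfBlock_succ v, Function.iterate_succ_apply']
    simp only [tfBlock_succ', List.append_assoc, List.cons_append, List.singleton_append,
      List.nil_append] at ht hf hy ⊢
    simp only [Ypart, tfBlock_succ, natGame_zero, List.replicate_one, List.append_assoc,
      List.cons_append, List.singleton_append, List.nil_append] at hx
    exact tf_equiv_mk ht hf hx hy

-- batch 8: main theorem
lemma intGame_ofNat (n : ℕ) : intGame (n : ℤ) = natGame n := rfl

/-- `L T^a □ (TF)^b T F^c R = { a-1 | O^b( L T^a F (TF)^b T □ F^(c-1) R ) }`
for `a ≥ 1`, `b ≥ 0`, `c ≥ 2`, where `O(x) = {0 | x}`, `L` is a `{T,F}`-string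
ending in `F` (possibly empty) and `R` a `{T,F}`-string starting with `T`
(possibly empty). -/
theorem LTabox_TFb_T_Fc_R (a b c : ℕ) (ha : 1 ≤ a) (hc : 2 ≤ c)
    (L R : List Cell) (hLE : Cell.E ∉ L) (hRE : Cell.E ∉ R)
    (hL : L = [] ∨ L.getLast? = some Cell.F)
    (hR : R = [] ∨ R.head? = some Cell.T) :
    tfGame (L ++ List.replicate a Cell.T ++ [Cell.E] ++ tfBlock b ++
        [Cell.T] ++ List.replicate c Cell.F ++ R) ≈
      gmk (intGame ((a : ℤ) - 1))
        ((fun x => gmk 0 x)^[b]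
          (tfGame (L ++ List.replicate a Cell.T ++ [Cell.F] ++ tfBlock b ++
            [Cell.T, Cell.E] ++ List.replicate (c - 1) Cell.F ++ R))) := by
  have ha1 : a - 1 + 1 = a := by omega
  have hrepa : List.replicate a Cell.T = List.replicate (a-1) Cell.T ++ [Cell.T] := by
    conv_lhs => rw [← ha1]
    exact List.replicate_succ' (n := a-1) (a := Cell.T)
  have hXL : Cell.E ∉ L ++ List.replicate (a-1) Cell.T := by
    intro h; rcases List.mem_append.1 h with h | h
    exacts [hLE h, E_not_mem_rep_T _ h]
  have hXa : Cell.E ∉ L ++ List.replicate a Cell.T := by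
    intro h; rcases List.mem_append.1 h with h | h
    exacts [hLE h, E_not_mem_rep_T _ h]
  have hYb : Cell.E ∉ tfBlock b ++ [Cell.T] ++ List.replicate c Cell.F ++ R := by
    intro h
    rcases List.mem_append.1 h with h | h
    · rcases List.mem_append.1 h with h | h
      · rcases List.mem_append.1 h with h | h
        exacts [E_not_mem_tfBlock _ h, by simp at h]
      · exact E_not_mem_rep_F _ h
    · exact hRE h
  have ht := toadMoves_slide (L ++ List.replicate (a-1) Cell.T)
    (Y := tfBlock b ++ [Cell.T] ++ List.replicate c Cell.F ++ R) hXL hYb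
  have hx := claimD (L ++ List.replicate (a-1) Cell.T).length _ le_rfl hXL 1 b c R
    (by omega) hRE
  rw [trailT_rep (L := L) hL (a-1)] at hx
  rw [show ((a:ℤ)-1) = ((a-1:ℕ):ℤ) from by omega, intGame_ofNat]
  have hYc : Cell.E ∉ List.replicate (c-1) Cell.F ++ R := by
    intro h; rcases List.mem_append.1 h with h | h
    exacts [E_not_mem_rep_F _ h, hRE h]
  cases b with
  | zero =>
    have hf := frogMoves_jump (L ++ List.replicate a Cell.T)
      (Y := List.replicate (c-1) Cell.F ++ R) hXa hYc
    simp only [Function.iterate_zero, id_eq]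
    simp only [hrepa, repF_succ c (by omega), Ypart, tfBlock_zero, natGame_zero,
      List.replicate_one, List.append_assoc, List.cons_append, List.singleton_append,
      List.nil_append] at ht hf hx ⊢
    exact tf_equiv_mk ht hf hx SetTheory.PGame.equiv_rfl
  | succ v =>
    have hf := frogMoves_jump (L ++ List.replicate a Cell.T)
      (Y := tfBlock v ++ [Cell.T] ++ List.replicate c Cell.F ++ R) hXa
      (by intro h
          rcases List.mem_append.1 h with h | h
          · rcases List.mem_append.1 h with h | h
            · rcases List.mem_append.1 h with h | h
              exacts [E_not_mem_tfBlock _ h, by simp at h]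
            · exact E_not_mem_rep_F _ h
          · exact hRE h)
    have hy := claimE v 0 (L ++ List.replicate a Cell.T) c R hXa (by omega) hRE
    rw [show 0 + v + 1 = v + 1 from by omega] at hy
    simp only [hrepa, repF_succ c (by omega), Ypart, tfBlock_zero, tfBlock_succ,
      natGame_zero, List.replicate_one, List.append_assoc, List.cons_append,
      List.singleton_append, List.nil_append] at ht hf hx hy ⊢
    exact tf_equiv_mk ht hf hx hy
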